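/- In the confounder SCM B := U_B, A := a·B + ā·U_A, C := c·B + c̄·U_C with ā = √(1−a²), c̄ = √(1−c²), and independent standard Gaussian noise, the minimal mean-squared residual of B after linear regression on (A, C) equals ā²c̄² / (ā² + c̄² − ā²c̄²). -/

import Mathlib

open MeasureTheory ProbabilityTheory Real
open scoped ENNReal NNReal

section GaussianMoments

lemma cr_integrable_exp_half : Integrable (fun x : ℝ => rexp (-(1/2) * x ^ 2)) :=
  integrable_exp_neg_mul_sq (by norm_num)

lemma cr_integrable_x_exp : Integrable (fun x : ℝ => x * rexp (-(1/2) * x ^ 2)) :=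
  integrable_mul_exp_neg_mul_sq (by norm_num)

lemma cr_integrable_x2_exp : Integrable (fun x : ℝ => x ^ 2 * rexp (-(1/2) * x ^ 2)) := by
  have h := integrable_rpow_mul_exp_neg_mul_sq (b := 1/2) (by norm_num) (s := 2) (by norm_num)
  refine h.congr ?_
  filter_upwards with x
  rw [show (2:ℝ) = ((2:ℕ):ℝ) from by norm_num, Real.rpow_natCast]

lemma cr_hasDerivAt_negexp (x : ℝ) :
    HasDerivAt (fun x : ℝ => -rexp (-(1/2) * x ^ 2)) (x * rexp (-(1/2) * x ^ 2)) x := by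
  have h1 : HasDerivAt (fun x : ℝ => -(1/2) * x ^ 2) (-(1/2) * (2 * x ^ 1)) x :=
    (hasDerivAt_pow 2 x).const_mul _
  have h2 : HasDerivAt (fun x : ℝ => -rexp (-(1/2) * x ^ 2)) _ x := (h1.exp).neg
  convert h2 using 1
  ring

lemma cr_int_x_exp : ∫ x : ℝ, x * rexp (-(1/2) * x ^ 2) = 0 :=
  integral_eq_zero_of_hasDerivAt_of_integrable cr_hasDerivAt_negexp cr_integrable_x_exp
    cr_integrable_exp_half.neg

lemma cr_int_exp_half : ∫ x : ℝ, rexp (-(1/2) * x ^ 2) = Real.sqrt (2 * π) := by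
  have := integral_gaussian (1/2)
  rw [show π / (1/2) = 2 * π by ring] at this
  simpa using this

lemma cr_int_x2_exp : ∫ x : ℝ, x ^ 2 * rexp (-(1/2) * x ^ 2) = Real.sqrt (2 * π) := by
  have h := integral_mul_deriv_eq_deriv_mul_of_integrable (A := ℝ)
    (u := fun x : ℝ => x) (u' := fun _ => 1)
    (v := fun x : ℝ => -rexp (-(1/2) * x ^ 2)) (v' := fun x => x * rexp (-(1/2) * x ^ 2))
    (fun x _ => hasDerivAt_id x) (fun x _ => cr_hasDerivAt_negexp x)
    (by refine cr_integrable_x2_exp.congr ?_; filter_upwards with x; simp [Pi.mul_apply]; try ring)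
    (by refine cr_integrable_exp_half.neg.congr ?_; filter_upwards with x; simp [Pi.mul_apply])
    (by refine cr_integrable_x_exp.neg.congr ?_; filter_upwards with x; simp [Pi.mul_apply]; try ring)
  have h2 : ∫ x : ℝ, x * (x * rexp (-(1/2) * x ^ 2)) = ∫ x : ℝ, rexp (-(1/2) * x ^ 2) := by
    rw [h]; rw [← integral_neg]; congr 1; funext x; simp
  rw [← cr_int_exp_half, ← h2]
  congr 1; funext x; ring

lemma cr_pdf01 (x : ℝ) :
    gaussianPDFReal 0 1 x = (Real.sqrt (2 * π))⁻¹ * rexp (-(1/2) * x ^ 2) := by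
  simp only [gaussianPDFReal, NNReal.coe_one, mul_one, sub_zero]
  ring_nf

lemma cr_pdf01_nonneg (x : ℝ) : 0 ≤ gaussianPDFReal 0 1 x := gaussianPDFReal_nonneg 0 1 x

lemma cr_gaussianReal01_eq : gaussianReal 0 1 =
    (volume : Measure ℝ).withDensity (fun x => ((gaussianPDFReal 0 1 x).toNNReal : ℝ≥0∞)) := by
  rw [gaussianReal_of_var_ne_zero 0 one_ne_zero, gaussianPDF_def]
  rfl

lemma cr_meas_pdf_nnreal : Measurable (fun x => (gaussianPDFReal 0 1 x).toNNReal) :=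
  (measurable_gaussianPDFReal 0 1).real_toNNReal

lemma cr_gauss_integral (f : ℝ → ℝ) :
    ∫ x, f x ∂(gaussianReal 0 1) = ∫ x, gaussianPDFReal 0 1 x * f x := by
  rw [cr_gaussianReal01_eq, integral_withDensity_eq_integral_smul cr_meas_pdf_nnreal]
  congr 1; funext x
  simp [NNReal.smul_def, Real.coe_toNNReal _ (cr_pdf01_nonneg x)]

lemma cr_gauss_integrable (f : ℝ → ℝ)
    (hf : Integrable (fun x => gaussianPDFReal 0 1 x * f x)) :
    Integrable f (gaussianReal 0 1) := by
  rw [cr_gaussianReal01_eq, integrable_withDensity_iff_integrable_smul cr_meas_pdf_nnreal]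
  refine hf.congr ?_
  filter_upwards with x
  simp [NNReal.smul_def, Real.coe_toNNReal _ (cr_pdf01_nonneg x)]

lemma cr_sqrt2pi_pos : (0:ℝ) < Real.sqrt (2 * π) := Real.sqrt_pos.mpr (by positivity)

lemma cr_gauss_moment1 : ∫ x, x ∂(gaussianReal 0 1) = 0 := by
  rw [cr_gauss_integral]
  have : ∀ x : ℝ, gaussianPDFReal 0 1 x * x
      = (Real.sqrt (2 * π))⁻¹ * (x * rexp (-(1/2) * x ^ 2)) := by
    intro x; rw [cr_pdf01]; ring
  simp_rw [this, integral_const_mul, cr_int_x_exp, mul_zero]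

lemma cr_gauss_moment2 : ∫ x, x ^ 2 ∂(gaussianReal 0 1) = 1 := by
  rw [cr_gauss_integral]
  have : ∀ x : ℝ, gaussianPDFReal 0 1 x * x ^ 2
      = (Real.sqrt (2 * π))⁻¹ * (x ^ 2 * rexp (-(1/2) * x ^ 2)) := by
    intro x; rw [cr_pdf01]; ring
  simp_rw [this, integral_const_mul, cr_int_x2_exp]
  exact inv_mul_cancel₀ (ne_of_gt cr_sqrt2pi_pos)

lemma cr_gauss_integrable_id : Integrable (fun x : ℝ => x) (gaussianReal 0 1) := by
  refine cr_gauss_integrable _ ((cr_integrable_x_exp.const_mul (Real.sqrt (2 * π))⁻¹).congr ?_)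
  filter_upwards with x
  rw [cr_pdf01]; ring

lemma cr_gauss_integrable_sq : Integrable (fun x : ℝ => x ^ 2) (gaussianReal 0 1) := by
  refine cr_gauss_integrable _ ((cr_integrable_x2_exp.const_mul (Real.sqrt (2 * π))⁻¹).congr ?_)
  filter_upwards with x
  rw [cr_pdf01]; ring

variable {Ω : Type*} [MeasurableSpace Ω] {μ : Measure Ω}

lemma cr_mapped_integrable {X : Ω → ℝ} (hX : Measurable X)
    (hmap : Measure.map X μ = gaussianReal 0 1) : Integrable X μ := by
  have := (integrable_map_measure (f := X) (g := fun x : ℝ => x)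
    measurable_id.aestronglyMeasurable hX.aemeasurable).mp
    (by rw [hmap]; exact cr_gauss_integrable_id)
  exact this

lemma cr_mapped_integrable_sq {X : Ω → ℝ} (hX : Measurable X)
    (hmap : Measure.map X μ = gaussianReal 0 1) : Integrable (fun ω => X ω ^ 2) μ := by
  have := (integrable_map_measure (f := X) (g := fun x : ℝ => x ^ 2)
    (measurable_id.pow_const 2).aestronglyMeasurable hX.aemeasurable).mp
    (by rw [hmap]; exact cr_gauss_integrable_sq)
  exact this

lemma cr_mapped_moment1 {X : Ω → ℝ} (hX : Measurable X)
    (hmap : Measure.map X μ = gaussianReal 0 1) : ∫ ω, X ω ∂μ = 0 := by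
  have := integral_map (f := fun x : ℝ => x) hX.aemeasurable
    measurable_id.aestronglyMeasurable (μ := μ)
  rw [hmap] at this
  rw [← this, cr_gauss_moment1]

lemma cr_mapped_moment2 {X : Ω → ℝ} (hX : Measurable X)
    (hmap : Measure.map X μ = gaussianReal 0 1) : ∫ ω, X ω ^ 2 ∂μ = 1 := by
  have := integral_map (f := fun x : ℝ => x ^ 2) hX.aemeasurable
    (measurable_id.pow_const 2).aestronglyMeasurable (μ := μ)
  rw [hmap] at this
  rw [← this, cr_gauss_moment2]

lemma cr_combo (μ : Measure Ω) [IsProbabilityMeasure μ] {X Y Z : Ω → ℝ}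
    (hX : Measurable X) (hY : Measurable Y) (hZ : Measurable Z)
    (mX : Measure.map X μ = gaussianReal 0 1) (mY : Measure.map Y μ = gaussianReal 0 1)
    (mZ : Measure.map Z μ = gaussianReal 0 1)
    (hXY : IndepFun X Y μ) (hXZ : IndepFun X Z μ) (hYZ : IndepFun Y Z μ)
    (p q r : ℝ) :
    ∫ ω, (p * X ω + q * Y ω + r * Z ω) ^ 2 ∂μ = p ^ 2 + q ^ 2 + r ^ 2 := by
  have iX := cr_mapped_integrable hX mX
  have iY := cr_mapped_integrable hY mY
  have iZ := cr_mapped_integrable hZ mZ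
  have iX2 := cr_mapped_integrable_sq hX mX
  have iY2 := cr_mapped_integrable_sq hY mY
  have iZ2 := cr_mapped_integrable_sq hZ mZ
  have iXY : Integrable (fun ω => X ω * Y ω) μ := hXY.integrable_mul iX iY
  have iXZ : Integrable (fun ω => X ω * Z ω) μ := hXZ.integrable_mul iX iZ
  have iYZ : Integrable (fun ω => Y ω * Z ω) μ := hYZ.integrable_mul iY iZ
  have key : ∀ ω, (p * X ω + q * Y ω + r * Z ω) ^ 2
      = p ^ 2 * X ω ^ 2 + (q ^ 2 * Y ω ^ 2 + (r ^ 2 * Z ω ^ 2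
        + ((2 * p * q) * (X ω * Y ω) + ((2 * p * r) * (X ω * Z ω)
        + (2 * q * r) * (Y ω * Z ω))))) := by intro ω; ring
  simp_rw [key]
  have J5 : Integrable (fun ω => 2 * p * r * (X ω * Z ω) + 2 * q * r * (Y ω * Z ω)) μ :=
    (iXZ.const_mul _).add (iYZ.const_mul _)
  have J4 : Integrable (fun ω => 2 * p * q * (X ω * Y ω)
      + (2 * p * r * (X ω * Z ω) + 2 * q * r * (Y ω * Z ω))) μ := (iXY.const_mul _).add J5
  have J3 : Integrable (fun ω => r ^ 2 * Z ω ^ 2 + (2 * p * q * (X ω * Y ω)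
      + (2 * p * r * (X ω * Z ω) + 2 * q * r * (Y ω * Z ω)))) μ := (iZ2.const_mul _).add J4
  have J2 : Integrable (fun ω => q ^ 2 * Y ω ^ 2 + (r ^ 2 * Z ω ^ 2 + (2 * p * q * (X ω * Y ω)
      + (2 * p * r * (X ω * Z ω) + 2 * q * r * (Y ω * Z ω))))) μ := (iY2.const_mul _).add J3
  rw [integral_add (iX2.const_mul _) J2, integral_add (iY2.const_mul _) J3,
    integral_add (iZ2.const_mul _) J4, integral_add (iXY.const_mul _) J5,
    integral_add (iXZ.const_mul _) (iYZ.const_mul _)]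
  rw [integral_const_mul, integral_const_mul, integral_const_mul, integral_const_mul,
    integral_const_mul, integral_const_mul]
  rw [cr_mapped_moment2 hX mX, cr_mapped_moment2 hY mY, cr_mapped_moment2 hZ mZ]
  rw [hXY.integral_fun_mul_eq_mul_integral hX.aestronglyMeasurable hY.aestronglyMeasurable,
    hXZ.integral_fun_mul_eq_mul_integral hX.aestronglyMeasurable hZ.aestronglyMeasurable,
    hYZ.integral_fun_mul_eq_mul_integral hY.aestronglyMeasurable hZ.aestronglyMeasurable]
  rw [cr_mapped_moment1 hX mX, cr_mapped_moment1 hY mY, cr_mapped_moment1 hZ mZ]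
  ring

end GaussianMoments

lemma cr_alg_mem (a c A2 C2 : ℝ) (hA2 : A2 = 1 - a ^ 2) (hC2 : C2 = 1 - c ^ 2)
    (hA2pos : 0 < A2) (hC2pos : 0 < C2) :
    ∃ α γ : ℝ, (1 - α * a - γ * c) ^ 2 + α ^ 2 * A2 + γ ^ 2 * C2
      = A2 * C2 / (A2 + C2 - A2 * C2) := by
  have hΔ : 0 < A2 + C2 - A2 * C2 := by nlinarith
  refine ⟨a * C2 / (A2 + C2 - A2 * C2), c * A2 / (A2 + C2 - A2 * C2), ?_⟩
  subst hA2 hC2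
  have hΔ' : 1 - a ^ 2 + (1 - c ^ 2) - (1 - c ^ 2) * (1 - a ^ 2) ≠ 0 := by rw [mul_comm]; exact hΔ.ne'
  field_simp
  ring

lemma cr_alg_lb (a c A2 C2 : ℝ) (hA2 : A2 = 1 - a ^ 2) (hC2 : C2 = 1 - c ^ 2)
    (hA2pos : 0 < A2) (hC2pos : 0 < C2) (α γ : ℝ) :
    A2 * C2 / (A2 + C2 - A2 * C2)
      ≤ (1 - α * a - γ * c) ^ 2 + α ^ 2 * A2 + γ ^ 2 * C2 := by
  have hΔ : 0 < A2 + C2 - A2 * C2 := by nlinarith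
  set Δ := A2 + C2 - A2 * C2 with hΔdef
  set f := (1 - α * a - γ * c) ^ 2 + α ^ 2 * A2 + γ ^ 2 * C2 with hf
  have key : (f * Δ - A2 * C2) * Δ
      = (a * (Δ * α - a * C2) + c * (Δ * γ - c * A2)) ^ 2
        + A2 * (Δ * α - a * C2) ^ 2 + C2 * (Δ * γ - c * A2) ^ 2 := by
    subst hA2 hC2; rw [hf, hΔdef]; ring
  have h1 : 0 ≤ (f * Δ - A2 * C2) * Δ := by rw [key]; positivity
  rw [div_le_iff₀ hΔ]
  nlinarith [h1, hΔ]

/-- In the confounder SCM `B := U_B`, `A := a·B + ā·U_A`, `C := c·B + c̄·U_C` with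
`ā = √(1−a²)`, `c̄ = √(1−c²)` and independent standard Gaussian noise, the minimal
mean-squared residual of `B` after linear regression on `(A, C)` equals
`ā²c̄² / (ā² + c̄² − ā²c̄²)`. -/
theorem confounder_regression_residual
    {Ω : Type*} [MeasurableSpace Ω] (μ : Measure Ω) [IsProbabilityMeasure μ]
    (a c : ℝ) (ha : |a| < 1) (hc : |c| < 1)
    (abar cbar : ℝ) (habar : abar = Real.sqrt (1 - a ^ 2))
    (hcbar : cbar = Real.sqrt (1 - c ^ 2))
    (UA UB UC A B C : Ω → ℝ)
    (hmeas : ∀ i, Measurable (![UA, UB, UC] i))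
    (hindep : iIndepFun ![UA, UB, UC] μ)
    (hgauss : ∀ i, Measure.map (![UA, UB, UC] i) μ = gaussianReal 0 1)
    (hBdef : B = UB)
    (hAdef : A = fun ω => a * B ω + abar * UA ω)
    (hCdef : C = fun ω => c * B ω + cbar * UC ω) :
    IsLeast {e : ℝ | ∃ α γ : ℝ, e = ∫ ω, (B ω - α * A ω - γ * C ω) ^ 2 ∂μ}
      (abar ^ 2 * cbar ^ 2 / (abar ^ 2 + cbar ^ 2 - abar ^ 2 * cbar ^ 2)) := by
  have hUA : Measurable UA := by simpa using hmeas 0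
  have hUB : Measurable UB := by simpa using hmeas 1
  have hUC : Measurable UC := by simpa using hmeas 2
  have mUA : Measure.map UA μ = gaussianReal 0 1 := by simpa using hgauss 0
  have mUB : Measure.map UB μ = gaussianReal 0 1 := by simpa using hgauss 1
  have mUC : Measure.map UC μ = gaussianReal 0 1 := by simpa using hgauss 2
  have iBA : IndepFun UB UA μ := by
    have := hindep.indepFun (i := 0) (j := 1) (by decide)
    simpa using this.symm
  have iBC : IndepFun UB UC μ := by
    have := hindep.indepFun (i := 1) (j := 2) (by decide)
    simpa using this
  have iAC : IndepFun UA UC μ := by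
    have := hindep.indepFun (i := 0) (j := 2) (by decide)
    simpa using this
  -- squared bar quantities
  have ha2 : a ^ 2 < 1 := by
    have := abs_lt.mp ha
    nlinarith [this.1, this.2]
  have hc2 : c ^ 2 < 1 := by
    have := abs_lt.mp hc
    nlinarith [this.1, this.2]
  have habar2 : abar ^ 2 = 1 - a ^ 2 := by
    rw [habar, Real.sq_sqrt (by linarith)]
  have hcbar2 : cbar ^ 2 = 1 - c ^ 2 := by
    rw [hcbar, Real.sq_sqrt (by linarith)]
  have hA2pos : 0 < abar ^ 2 := by rw [habar2]; linarith
  have hC2pos : 0 < cbar ^ 2 := by rw [hcbar2]; linarith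
  -- the integral formula
  have hformula : ∀ α γ : ℝ, ∫ ω, (B ω - α * A ω - γ * C ω) ^ 2 ∂μ
      = (1 - α * a - γ * c) ^ 2 + α ^ 2 * abar ^ 2 + γ ^ 2 * cbar ^ 2 := by
    intro α γ
    have hfun : (fun ω => (B ω - α * A ω - γ * C ω) ^ 2)
        = fun ω => ((1 - α * a - γ * c) * UB ω + (-(α * abar)) * UA ω
          + (-(γ * cbar)) * UC ω) ^ 2 := by
      subst hBdef hAdef hCdef
      funext ω; ring
    rw [hfun, cr_combo μ hUB hUA hUC mUB mUA mUC iBA iBC iAC]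
    ring
  constructor
  · obtain ⟨α, γ, hval⟩ := cr_alg_mem a c (abar ^ 2) (cbar ^ 2) habar2 hcbar2 hA2pos hC2pos
    exact ⟨α, γ, by rw [hformula α γ, hval]⟩
  · rintro e ⟨α, γ, rfl⟩
    rw [hformula α γ]
    exact cr_alg_lb a c (abar ^ 2) (cbar ^ 2) habar2 hcbar2 hA2pos hC2pos α γ
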